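/- Proposition 2: Let A ∈ ℝ^{n×n}, b ∈ ℝ^{n×1} a column vector, c ∈ ℝ^{1×n} a row vector, a ∈ ℝ, Q ∈ ℝ^{r×n}, and ρ ∈ ℝ^{r×1}. Set f(x) = A x + b and D = {x ∈ ℝⁿ : c x < a}. Suppose there exist an essentially non-negative matrix H ∈ ℝ^{r×r} and non-negative column vectors η, ξ, λ ∈ ℝ^{r×1} (η ≥ 0, ξ ≥ 0, λ ≥ 0 entrywise) such that: (1) H Q + ξ c − diag(λ) Q A = 0; (2) H ρ + η + ξ a + diag(λ) Q b = 0; and (3) ξ + η > 0 entrywise. Then the polyhedron P = {x ∈ ℝⁿ : Q x ≤ ρ} is a continuous invariant of (D, f). -/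

import Mathlib

open MvPolynomial Set

/-- Lie derivatives of a polynomial `p` along the polynomial vector field `f`. -/
noncomputable def lieDeriv {n : ℕ} (f : Fin n → MvPolynomial (Fin n) ℝ)
    (p : MvPolynomial (Fin n) ℝ) : ℕ → MvPolynomial (Fin n) ℝ
  | 0 => p
  | k + 1 => ∑ i, (pderiv i (lieDeriv f p k)) * f i

/-- Evaluation of a polynomial vector field at a point of ℝⁿ. -/
noncomputable def evalVF {n : ℕ} (f : Fin n → MvPolynomial (Fin n) ℝ)
    (x : Fin n → ℝ) : Fin n → ℝ := fun i => eval x (f i)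

/-- `x : ℝ → ℝⁿ` is a solution of `ẋ = F(x)` on `[0, ∞)`. -/
def IsSolutionOn {n : ℕ} (F : (Fin n → ℝ) → (Fin n → ℝ)) (x : ℝ → (Fin n → ℝ)) : Prop :=
  ∀ t ∈ Ici (0:ℝ), HasDerivWithinAt x (F (x t)) (Ici 0) t

/-- Solutions of `ẋ = F(x)` exist and are unique on `[0, ∞)` for every initial condition. -/
def CompleteFlow {n : ℕ} (F : (Fin n → ℝ) → (Fin n → ℝ)) : Prop :=
  (∀ x0 : Fin n → ℝ, ∃ x : ℝ → (Fin n → ℝ), x 0 = x0 ∧ IsSolutionOn F x) ∧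
  (∀ x y : ℝ → (Fin n → ℝ), IsSolutionOn F x → IsSolutionOn F y → x 0 = y 0 →
    ∀ t ∈ Ici (0:ℝ), x t = y t)

/-- `P` is a continuous invariant of `(D, F)`. -/
def IsCI {n : ℕ} (D P : Set (Fin n → ℝ)) (F : (Fin n → ℝ) → (Fin n → ℝ)) : Prop :=
  ∀ x : ℝ → (Fin n → ℝ), IsSolutionOn F x → x 0 ∈ P ∩ D →
    ∀ T ≥ (0:ℝ), (∀ t ∈ Icc (0:ℝ) T, x t ∈ D) → ∀ t ∈ Icc (0:ℝ) T, x t ∈ P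


open Filter in
private lemma aux_deriv_neg (h : ℝ → ℝ) (τ d : ℝ) (hτ : 0 ≤ τ)
    (hd : HasDerivWithinAt h d (Ici 0) τ) (h0 : h τ = 0) (hneg : d < 0) :
    ∀ᶠ t in nhdsWithin τ (Ioi τ), h t < 0 := by
  have hsub : Ioi τ ⊆ Ici (0:ℝ) \ {τ} := fun t ht => ⟨le_trans hτ (le_of_lt ht), ne_of_gt ht⟩
  have htend := (hasDerivWithinAt_iff_tendsto_slope.mp hd).mono_left (nhdsWithin_mono τ hsub)
  have hev : ∀ᶠ t in nhdsWithin τ (Ioi τ), slope h τ t < 0 :=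
    htend (Iio_mem_nhds hneg)
  filter_upwards [hev, self_mem_nhdsWithin] with t hst ht
  have htτ : 0 < t - τ := sub_pos.mpr ht
  have hsl : slope h τ t = h t / (t - τ) := by
    rw [slope_def_field, h0]; ring
  rw [hsl] at hst
  have := mul_neg_of_neg_of_pos hst htτ
  rwa [div_mul_cancel₀ _ (ne_of_gt htτ)] at this

private lemma aux_hder {n r : ℕ} (A : Matrix (Fin n) (Fin n) ℝ) (b : Fin n → ℝ)
    (Q : Matrix (Fin r) (Fin n) ℝ) (ρ : Fin r → ℝ) (x : ℝ → Fin n → ℝ)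
    (t : ℝ) (hx : HasDerivWithinAt x (A.mulVec (x t) + b) (Ici 0) t) (j : Fin r) :
    HasDerivWithinAt (fun s => Q.mulVec (x s) j - ρ j)
      (Q.mulVec (A.mulVec (x t) + b) j) (Ici 0) t := by
  have hc := hasDerivWithinAt_pi.mp hx
  have hsum : HasDerivWithinAt (fun s => ∑ k, Q j k * x s k)
      (∑ k, Q j k * (A.mulVec (x t) + b) k) (Ici 0) t :=
    HasDerivWithinAt.fun_sum fun k _ => (hc k).const_mul (Q j k)
  have := hsum.sub_const (ρ j)
  simpa [Matrix.mulVec, dotProduct] using this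

private lemma aux_key {n r : ℕ}
    (A : Matrix (Fin n) (Fin n) ℝ) (b : Fin n → ℝ) (c : Fin n → ℝ) (a : ℝ)
    (Q : Matrix (Fin r) (Fin n) ℝ) (ρ : Fin r → ℝ)
    (H : Matrix (Fin r) (Fin r) ℝ) (η ξ lam : Fin r → ℝ)
    (h1 : H * Q + Matrix.vecMulVec ξ c - Matrix.diagonal lam * Q * A = 0)
    (h2 : H.mulVec ρ + η + a • ξ + (Matrix.diagonal lam * Q).mulVec b = 0)
    (v : Fin n → ℝ) (i : Fin r) :
    lam i * Q.mulVec (A.mulVec v + b) i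
      = H.mulVec (fun j => Q.mulVec v j - ρ j) i + ξ i * (dotProduct c v - a) - η i := by
  have e1 : ∀ k, (H * Q) i k + ξ i * c k = lam i * (Q * A) i k := by
    intro k
    have h1' := congrFun (congrFun h1 i) k
    simp only [Matrix.add_apply, Matrix.sub_apply, Matrix.zero_apply, Matrix.mul_assoc,
      Matrix.diagonal_mul, Matrix.vecMulVec_apply, sub_eq_zero] at h1'
    exact h1'
  have e2 : H.mulVec ρ i + η i + a * ξ i + lam i * Q.mulVec b i = 0 := by
    have h2' := congrFun h2 i
    have hd : (Matrix.diagonal lam * Q).mulVec b i = lam i * Q.mulVec b i := by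
      simp [Matrix.mulVec, dotProduct, Matrix.diagonal_mul, Finset.mul_sum, mul_assoc]
    simp only [Pi.add_apply, Pi.smul_apply, smul_eq_mul, Pi.zero_apply, hd] at h2'
    linarith
  have lhs : lam i * Q.mulVec (A.mulVec v + b) i
      = (∑ k, lam i * (Q * A) i k * v k) + lam i * Q.mulVec b i := by
    simp only [Matrix.mulVec_add, Pi.add_apply, mul_add]
    congr 1
    simp only [Matrix.mulVec, dotProduct, Matrix.mul_apply, Finset.mul_sum,
      Finset.sum_mul]
    rw [Finset.sum_comm]
    exact Finset.sum_congr rfl fun k _ => Finset.sum_congr rfl fun j _ => by ring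
  have rhs1 : H.mulVec (fun j => Q.mulVec v j - ρ j) i
      = (∑ k, (H * Q) i k * v k) - H.mulVec ρ i := by
    simp only [Matrix.mulVec, dotProduct, Matrix.mul_apply, mul_sub,
      Finset.sum_sub_distrib, Finset.sum_mul, Finset.mul_sum]
    congr 1
    rw [Finset.sum_comm]
    exact Finset.sum_congr rfl fun k _ => Finset.sum_congr rfl fun j _ => by ring
  have rhs2 : ξ i * dotProduct c v = ∑ k, ξ i * c k * v k := by
    simp [dotProduct, Finset.mul_sum, mul_assoc]
  have key : ∑ k, lam i * (Q * A) i k * v k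
      = (∑ k, (H * Q) i k * v k) + ∑ k, ξ i * c k * v k := by
    rw [← Finset.sum_add_distrib]
    exact Finset.sum_congr rfl fun k _ => by rw [← add_mul, e1]
  rw [lhs, key, rhs1, mul_sub, rhs2]
  linarith

/-- **Proposition 2.** A sufficient condition, in terms of an essentially
non-negative matrix `H` and non-negative vectors `η, ξ, λ`, for the polyhedron
`{x | Q x ≤ ρ}` to be a continuous invariant of the affine system
`ẋ = A x + b` with open half-space domain `{x | c x < a}`. -/
theorem polyhedral_ci_sufficient {n r : ℕ}
    (A : Matrix (Fin n) (Fin n) ℝ) (b : Fin n → ℝ)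
    (c : Fin n → ℝ) (a : ℝ)
    (Q : Matrix (Fin r) (Fin n) ℝ) (ρ : Fin r → ℝ)
    (H : Matrix (Fin r) (Fin r) ℝ) (η ξ lam : Fin r → ℝ)
    (hH : ∀ i j, i ≠ j → 0 ≤ H i j)
    (hη : ∀ i, 0 ≤ η i) (hξ : ∀ i, 0 ≤ ξ i) (hlam : ∀ i, 0 ≤ lam i)
    (h1 : H * Q + Matrix.vecMulVec ξ c - Matrix.diagonal lam * Q * A = 0)
    (h2 : H.mulVec ρ + η + a • ξ + (Matrix.diagonal lam * Q).mulVec b = 0)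
    (h3 : ∀ i, 0 < ξ i + η i) :
    IsCI {x | dotProduct c x < a} {x | ∀ i, Q.mulVec x i ≤ ρ i}
      (fun x => A.mulVec x + b) := by
  intro x hsol hx0 T hT hD
  suffices hs : ∀ s ∈ Icc (0:ℝ) T, ∀ j, Q.mulVec (x s) j - ρ j ≤ 0 by
    intro t ht j
    have := hs t ht j
    linarith
  by_contra hcon
  push_neg at hcon
  obtain ⟨s0, hs0mem, j0, hj0⟩ := hcon
  set B : Set ℝ := {s : ℝ | s ∈ Icc (0:ℝ) T ∧ ∃ j, 0 < Q.mulVec (x s) j - ρ j} with hBdef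
  have hBne : B.Nonempty := ⟨s0, hs0mem, j0, by linarith⟩
  have hBbd : BddBelow B := ⟨0, fun s hs => hs.1.1⟩
  set τ := sInf B with hτdef
  have hτ0 : 0 ≤ τ := le_csInf hBne fun s hs => hs.1.1
  have hτT : τ ≤ T := le_trans (csInf_le hBbd ⟨hs0mem, j0, by linarith⟩) hs0mem.2
  have hgood : ∀ s, 0 ≤ s → s < τ → ∀ j, Q.mulVec (x s) j - ρ j ≤ 0 := by
    intro s hs0' hsτ j
    by_contra hpos
    push_neg at hpos
    have hsB : s ∈ B := ⟨⟨hs0', le_trans hsτ.le hτT⟩, j, hpos⟩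
    exact absurd (csInf_le hBbd hsB) (not_le.mpr hsτ)
  have hder : ∀ t, 0 ≤ t → ∀ j, HasDerivWithinAt (fun s => Q.mulVec (x s) j - ρ j)
      (Q.mulVec (A.mulVec (x t) + b) j) (Ici 0) t := fun t ht j =>
    aux_hder A b Q ρ x t (hsol t ht) j
  have hgτ : ∀ j, Q.mulVec (x τ) j - ρ j ≤ 0 := by
    intro j
    rcases eq_or_lt_of_le hτ0 with h0 | h0
    · rw [← h0]
      linarith [hx0.1 j]
    · haveI hne : (nhdsWithin τ (Ico 0 τ)).NeBot := by
        apply mem_closure_iff_nhdsWithin_neBot.mp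
        rw [closure_Ico (ne_of_lt h0)]
        exact ⟨hτ0, le_refl τ⟩
      have htend := ((hder τ hτ0 j).continuousWithinAt).mono
        (Ico_subset_Ici_self : Ico (0:ℝ) τ ⊆ Ici 0)
      exact le_of_tendsto htend
        (eventually_nhdsWithin_of_forall fun s hs => hgood s hs.1 hs.2 j)
  have hτmem : τ ∈ Icc (0:ℝ) T := ⟨hτ0, hτT⟩
  have hca : dotProduct c (x τ) < a := hD τ hτmem
  have hev : ∀ j, ∀ᶠ s in nhdsWithin τ (Ioi τ), Q.mulVec (x s) j - ρ j ≤ 0 := by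
    intro j
    rcases eq_or_lt_of_le (hgτ j) with heq | hlt
    swap
    · have hcw := (hder τ hτ0 j).continuousWithinAt.mono
        (fun s (hs : s ∈ Ioi τ) => le_trans hτ0 (le_of_lt hs))
      have hmem := hcw (Iio_mem_nhds hlt)
      filter_upwards [hmem] with s hs using le_of_lt hs
    · have hkey := aux_key A b c a Q ρ H η ξ lam h1 h2 (x τ) j
      have hHg : H.mulVec (fun i => Q.mulVec (x τ) i - ρ i) j ≤ 0 := by
        have hrfl : H.mulVec (fun i => Q.mulVec (x τ) i - ρ i) j
            = ∑ k, H j k * (Q.mulVec (x τ) k - ρ k) := rfl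
        rw [hrfl]
        apply Finset.sum_nonpos
        intro k _
        rcases eq_or_ne k j with rfl | hkj
        · rw [heq, mul_zero]
        · exact mul_nonpos_of_nonneg_of_nonpos (hH j k (Ne.symm hkj)) (hgτ k)
      have hw : H.mulVec (fun i => Q.mulVec (x τ) i - ρ i) j
          + ξ j * (dotProduct c (x τ) - a) - η j < 0 := by
        rcases eq_or_lt_of_le (hξ j) with hz | hp
        · have hηp : 0 < η j := by have := h3 j; linarith
          rw [← hz]
          simp only [zero_mul, add_zero]
          linarith
        · have hmn : ξ j * (dotProduct c (x τ) - a) < 0 :=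
            mul_neg_of_pos_of_neg hp (by linarith)
          linarith [hη j]
      have hld : lam j * Q.mulVec (A.mulVec (x τ) + b) j < 0 := by
        rw [hkey]; exact hw
      rcases eq_or_lt_of_le (hlam j) with hl0 | hlp
      · exfalso
        rw [← hl0, zero_mul] at hld
        exact lt_irrefl 0 hld
      · have hdneg : Q.mulVec (A.mulVec (x τ) + b) j < 0 := by
          by_contra hge
          push_neg at hge
          nlinarith
        have hlt' := aux_deriv_neg (fun s => Q.mulVec (x s) j - ρ j) τ _ hτ0
          (hder τ hτ0 j) heq hdneg
        filter_upwards [hlt'] with s hs using le_of_lt hs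
  have hall : ∀ᶠ s in nhdsWithin τ (Ioi τ), ∀ j, Q.mulVec (x s) j - ρ j ≤ 0 :=
    Filter.eventually_all.mpr hev
  rw [Filter.eventually_iff, Metric.mem_nhdsWithin_iff] at hall
  obtain ⟨ε, hε, hball⟩ := hall
  have hτnB : τ ∉ B := by
    rintro ⟨-, j, hj⟩
    linarith [hgτ j]
  have hlt2 : sInf B < τ + ε := by rw [← hτdef]; linarith
  obtain ⟨s, hsB, hslt⟩ := (csInf_lt_iff hBbd hBne).mp hlt2
  have hτs : τ ≤ s := csInf_le hBbd hsB
  have hτs' : τ < s := lt_of_le_of_ne hτs (fun h => hτnB (h ▸ hsB))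
  have hdist : dist s τ < ε := by
    rw [Real.dist_eq, abs_of_pos (by linarith : (0:ℝ) < s - τ)]
    linarith
  have hsle := hball ⟨Metric.mem_ball.mpr hdist, hτs'⟩
  obtain ⟨-, j, hj⟩ := hsB
  linarith [hsle j]
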